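/- Let R, C be positive integers, S > 0 a real number, and Υ ≥ 1. Suppose S/(RC) ≤ p_{ij} ≤ Υ·S/(RC) for all 1 ≤ i ≤ R, 1 ≤ j ≤ C. Then the matrix M'_1 satisfies ‖M'_1‖₂ ≤ √( 1 − 1/Υ³ + (Υ−1)² ). -/

import Mathlib

namespace CollapsedGibbs

/-- The matrix
`M'₁ = (I_R − (1/R) D̄₁^{1/2} 1_R 1_Rᵀ D̄₁^{−1/2}) D̄₁^{−1/2} Z̄ D̄₂^{−1/2}`
built from a nonnegative matrix `Z̄ = (p_{ij})` with row sums `N̄_{i·}` and column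
sums `N̄_{·j}`. -/
noncomputable def Mprime1 {R C : ℕ} (p : Fin R → Fin C → ℝ) : Matrix (Fin R) (Fin C) ℝ :=
  let Nrow : Fin R → ℝ := fun i => ∑ j, p i j
  let Ncol : Fin C → ℝ := fun j => ∑ i, p i j
  ((1 : Matrix (Fin R) (Fin R) ℝ) -
      (R : ℝ)⁻¹ • (Matrix.diagonal (fun i => Real.sqrt (Nrow i))
        * Matrix.of (fun (_ _ : Fin R) => (1 : ℝ))
        * Matrix.diagonal (fun i => (Real.sqrt (Nrow i))⁻¹)))
    * Matrix.diagonal (fun i => (Real.sqrt (Nrow i))⁻¹)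
    * Matrix.of p
    * Matrix.diagonal (fun j => (Real.sqrt (Ncol j))⁻¹)

/-- The ℓ²→ℓ² operator (spectral) norm of a real matrix. -/
noncomputable def l2OpNorm {m n : ℕ} (A : Matrix (Fin m) (Fin n) ℝ) : ℝ :=
  ‖LinearMap.toContinuousLinearMap (Matrix.toEuclideanLin A)‖

/-- variance identity -/
lemma var_ident {n : ℕ} (w g : Fin n → ℝ) :
    ∑ i, ∑ k, w i * w k * (g i - g k) ^ 2
      = 2 * ((∑ i, w i) * (∑ i, w i * g i ^ 2)) - 2 * (∑ i, w i * g i) ^ 2 := by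
  have e : ∀ i k : Fin n, w i * w k * (g i - g k) ^ 2
      = (w i * g i ^ 2) * w k + w i * (w k * g k ^ 2) - (w i * g i) * (2 * (w k * g k)) := by
    intros; ring
  simp_rw [e, Finset.sum_sub_distrib, Finset.sum_add_distrib, ← Finset.mul_sum, ← Finset.sum_mul]
  ring

/-- mulVec formula for Mprime1 -/
lemma Mprime1_mulVec {R C : ℕ} (p : Fin R → Fin C → ℝ) (x : Fin C → ℝ) (i : Fin R) :
    (Mprime1 p).mulVec x i =
      ((Real.sqrt (∑ j, p i j))⁻¹ * ∑ j, p i j * ((Real.sqrt (∑ l, p l j))⁻¹ * x j))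
      - (R:ℝ)⁻¹ * (Real.sqrt (∑ j, p i j) *
          ∑ k, (Real.sqrt (∑ j, p k j))⁻¹ *
            ((Real.sqrt (∑ j, p k j))⁻¹ * ∑ j, p k j * ((Real.sqrt (∑ l, p l j))⁻¹ * x j))) := by
  set y : Fin R → ℝ :=
    fun m => (Real.sqrt (∑ j, p m j))⁻¹ * ∑ j, p m j * ((Real.sqrt (∑ l, p l j))⁻¹ * x j) with hy
  show (Mprime1 p).mulVec x i
      = y i - (R:ℝ)⁻¹ * (Real.sqrt (∑ j, p i j) * ∑ k, (Real.sqrt (∑ j, p k j))⁻¹ * y k)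
  have h1 : (Mprime1 p).mulVec x =
      ((1 : Matrix (Fin R) (Fin R) ℝ) -
      (R : ℝ)⁻¹ • (Matrix.diagonal (fun i => Real.sqrt (∑ j, p i j))
        * Matrix.of (fun (_ _ : Fin R) => (1 : ℝ))
        * Matrix.diagonal (fun i => (Real.sqrt (∑ j, p i j))⁻¹))).mulVec
      ((Matrix.diagonal (fun i => (Real.sqrt (∑ j, p i j))⁻¹)).mulVec
        ((Matrix.of p).mulVec ((Matrix.diagonal (fun j => (Real.sqrt (∑ k, p k j))⁻¹)).mulVec x))) := by
    simp only [Mprime1, Matrix.mulVec_mulVec, Matrix.mul_assoc]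
  rw [h1]
  have h0 : (Matrix.diagonal (fun j => (Real.sqrt (∑ k, p k j))⁻¹)).mulVec x
      = fun j => (Real.sqrt (∑ k, p k j))⁻¹ * x j := by
    funext j; simp [Matrix.mulVec_diagonal]
  have h2 : (Matrix.of p).mulVec (fun j => (Real.sqrt (∑ k, p k j))⁻¹ * x j)
      = fun i => ∑ j, p i j * ((Real.sqrt (∑ k, p k j))⁻¹ * x j) := by
    funext i; simp [Matrix.mulVec, dotProduct]
  rw [h0, h2]
  have h3 : (Matrix.diagonal (fun i => (Real.sqrt (∑ j, p i j))⁻¹)).mulVec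
      (fun i => ∑ j, p i j * ((Real.sqrt (∑ k, p k j))⁻¹ * x j)) = y := by
    funext i; simp [Matrix.mulVec_diagonal, hy]
  rw [h3, Matrix.sub_mulVec, Matrix.one_mulVec, Matrix.smul_mulVec, ← Matrix.mulVec_mulVec,
    ← Matrix.mulVec_mulVec]
  have h4 : (Matrix.diagonal (fun i => (Real.sqrt (∑ j, p i j))⁻¹)).mulVec y
      = fun k => (Real.sqrt (∑ j, p k j))⁻¹ * y k := by
    funext k; simp [Matrix.mulVec_diagonal]
  rw [h4]
  have h5 : (Matrix.of (fun (_ _ : Fin R) => (1:ℝ))).mulVec (fun k => (Real.sqrt (∑ j, p k j))⁻¹ * y k)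
      = fun _ => ∑ k, (Real.sqrt (∑ j, p k j))⁻¹ * y k := by
    funext i; simp [Matrix.mulVec, dotProduct]
  rw [h5]
  simp [Matrix.mulVec_diagonal, Pi.smul_apply, mul_comm]

set_option maxHeartbeats 1000000 in
/-- **Spectral-norm bound for `M'₁` in the second regime.**  If
`S/(RC) ≤ p_{ij} ≤ Υ·S/(RC)`, then `‖M'₁‖₂ ≤ √(1 − 1/Υ³ + (Υ−1)²)`. -/
theorem Mprime1_l2OpNorm_le
    (R C : ℕ) (hR : 0 < R) (hC : 0 < C) (S : ℝ) (hS : 0 < S)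
    (Υ : ℝ) (hΥ : 1 ≤ Υ)
    (p : Fin R → Fin C → ℝ)
    (hp1 : ∀ i j, S / (R * C) ≤ p i j)
    (hp2 : ∀ i j, p i j ≤ Υ * S / (R * C)) :
    l2OpNorm (Mprime1 p) ≤ Real.sqrt (1 - 1 / Υ ^ 3 + (Υ - 1) ^ 2) := by
  have hRpos : (0:ℝ) < (R:ℝ) := by exact_mod_cast hR
  have hCpos : (0:ℝ) < (C:ℝ) := by exact_mod_cast hC
  have hΥ0 : (0:ℝ) < Υ := lt_of_lt_of_le one_pos hΥ
  set s : ℝ := S / ((R:ℝ) * (C:ℝ)) with hs_def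
  have hs : 0 < s := div_pos hS (by positivity)
  have hps : ∀ i j, s ≤ p i j := hp1
  have hpΥ : ∀ i j, p i j ≤ Υ * s := by
    intro i j; rw [hs_def, ← mul_div_assoc]; exact hp2 i j
  have hppos : ∀ i j, 0 < p i j := fun i j => lt_of_lt_of_le hs (hps i j)
  set N : Fin R → ℝ := fun i => ∑ j, p i j with hN_def
  set N' : Fin C → ℝ := fun j => ∑ i, p i j with hN'_def
  set T : ℝ := ∑ i, N i with hT_def
  have hNlb : ∀ i, (C:ℝ) * s ≤ N i := by
    intro i
    calc (C:ℝ) * s = ∑ _j : Fin C, s := by simp [mul_comm]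
    _ ≤ N i := Finset.sum_le_sum fun j _ => hps i j
  have hNub : ∀ i, N i ≤ (C:ℝ) * (Υ * s) := by
    intro i
    calc N i ≤ ∑ _j : Fin C, Υ * s := Finset.sum_le_sum fun j _ => hpΥ i j
    _ = (C:ℝ) * (Υ * s) := by simp [mul_comm]
  have hN'lb : ∀ j, (R:ℝ) * s ≤ N' j := by
    intro j
    calc (R:ℝ) * s = ∑ _i : Fin R, s := by simp [mul_comm]
    _ ≤ N' j := Finset.sum_le_sum fun i _ => hps i j
  have hN'ub : ∀ j, N' j ≤ (R:ℝ) * (Υ * s) := by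
    intro j
    calc N' j ≤ ∑ _i : Fin R, Υ * s := Finset.sum_le_sum fun i _ => hpΥ i j
    _ = (R:ℝ) * (Υ * s) := by simp [mul_comm]
  have hTlb : (R:ℝ) * ((C:ℝ) * s) ≤ T := by
    calc (R:ℝ) * ((C:ℝ)*s) = ∑ _i : Fin R, (C:ℝ)*s := by simp [mul_comm]
    _ ≤ T := Finset.sum_le_sum fun i _ => hNlb i
  have hTub : T ≤ (R:ℝ) * ((C:ℝ) * (Υ * s)) := by
    calc T ≤ ∑ _i : Fin R, (C:ℝ)*(Υ*s) := Finset.sum_le_sum fun i _ => hNub i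
    _ = (R:ℝ) * ((C:ℝ)*(Υ*s)) := by simp [mul_comm]
  have hNpos : ∀ i, 0 < N i := fun i => lt_of_lt_of_le (by positivity) (hNlb i)
  have hN'pos : ∀ j, 0 < N' j := fun j => lt_of_lt_of_le (by positivity) (hN'lb j)
  have hTpos : 0 < T := lt_of_lt_of_le (by positivity) hTlb
  have hsqNpos : ∀ i, 0 < Real.sqrt (N i) := fun i => Real.sqrt_pos.mpr (hNpos i)
  have hsqN'pos : ∀ j, 0 < Real.sqrt (N' j) := fun j => Real.sqrt_pos.mpr (hN'pos j)
  have hsqN : ∀ i, Real.sqrt (N i) ^ 2 = N i := fun i => Real.sq_sqrt (hNpos i).le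
  have hsqN' : ∀ j, Real.sqrt (N' j) ^ 2 = N' j := fun j => Real.sq_sqrt (hN'pos j).le
  have hcoef : (0:ℝ) ≤ 1 - 1 / Υ ^ 3 + (Υ - 1) ^ 2 := by
    have h3 : (1:ℝ) ≤ Υ ^ 3 := one_le_pow₀ hΥ
    have : 1 / Υ ^ 3 ≤ 1 := by rw [div_le_one (by positivity)]; exact h3
    nlinarith [sq_nonneg (Υ - 1)]
  have hδ : (0:ℝ) ≤ 1 - 1 / Υ ^ 3 := by
    have h3 : (1:ℝ) ≤ Υ ^ 3 := one_le_pow₀ hΥ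
    have : 1 / Υ ^ 3 ≤ 1 := by rw [div_le_one (by positivity)]; exact h3
    linarith
  -- THE KEY SUM INEQUALITY
  have key : ∀ x : Fin C → ℝ,
      ∑ i, ((Mprime1 p).mulVec x i) ^ 2
        ≤ (1 - 1 / Υ ^ 3 + (Υ - 1) ^ 2) * ∑ j, (x j) ^ 2 := by
    intro x
    set y : Fin R → ℝ :=
      fun m => (Real.sqrt (N m))⁻¹ * ∑ j, p m j * ((Real.sqrt (N' j))⁻¹ * x j) with hy_def
    have hMx : ∀ i, (Mprime1 p).mulVec x i
        = y i - (R:ℝ)⁻¹ * (Real.sqrt (N i) * ∑ k, (Real.sqrt (N k))⁻¹ * y k) := by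
      intro i
      rw [Mprime1_mulVec p x i]
    set β : ℝ := ∑ k, Real.sqrt (N k) * y k with hβ_def
    set α : ℝ := (R:ℝ)⁻¹ * ∑ k, (Real.sqrt (N k))⁻¹ * y k with hα_def
    set γ : ℝ := β / T - α with hγ_def
    set t : Fin R → ℝ := fun i => y i - Real.sqrt (N i) * (β / T) with ht_def
    set g : Fin R → ℝ := fun i => (Real.sqrt (N i))⁻¹ * t i with hg_def
    clear_value y
    clear_value β α γ t g
    set X2 : ℝ := ∑ j, (x j) ^ 2 with hX2_def
    set A2 : ℝ := ∑ i, (t i) ^ 2 with hA2_def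
    have hX2nn : 0 ≤ X2 := Finset.sum_nonneg fun j _ => sq_nonneg _
    have hA2nn : 0 ≤ A2 := Finset.sum_nonneg fun i _ => sq_nonneg _
    have hgt : ∀ i, Real.sqrt (N i) * g i = t i := by
      intro i
      rw [hg_def, ← mul_assoc, mul_inv_cancel₀ (hsqNpos i).ne', one_mul]
    have ht_orth : ∑ i, Real.sqrt (N i) * t i = 0 := by
      have h1 : ∀ i, Real.sqrt (N i) * t i = Real.sqrt (N i) * y i - N i * (β / T) := by
        intro i
        rw [ht_def]
        linear_combination (-(β / T)) * hsqN i
      rw [Finset.sum_congr rfl fun i _ => h1 i, Finset.sum_sub_distrib, ← Finset.sum_mul,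
        ← hβ_def, ← hT_def, mul_div_cancel₀ _ hTpos.ne']
      ring
    have hMsum : ∑ i, ((Mprime1 p).mulVec x i) ^ 2 = A2 + γ ^ 2 * T := by
      have hform : ∀ i, (Mprime1 p).mulVec x i = t i + Real.sqrt (N i) * γ := by
        intro i
        rw [hMx i, ht_def, hγ_def, hα_def]
        ring
      have hexp : ∀ i, ((Mprime1 p).mulVec x i) ^ 2
          = (t i) ^ 2 + 2 * γ * (Real.sqrt (N i) * t i) + γ ^ 2 * N i := by
        intro i
        rw [hform i]
        linear_combination γ ^ 2 * hsqN i
      rw [Finset.sum_congr rfl fun i _ => hexp i, Finset.sum_add_distrib,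
        Finset.sum_add_distrib, ← Finset.mul_sum, ht_orth, ← Finset.mul_sum, ← hT_def,
        ← hA2_def]
      ring
    -- bound C : ∑ y² ≤ X2
    have hy2 : ∀ i, (y i) ^ 2 ≤ ∑ j, p i j * ((N' j)⁻¹ * (x j) ^ 2) := by
      intro i
      have hcs := Finset.sum_mul_sq_le_sq_mul_sq Finset.univ
        (fun j => Real.sqrt (p i j) * (Real.sqrt (N i))⁻¹)
        (fun j => Real.sqrt (p i j) * ((Real.sqrt (N' j))⁻¹ * x j))
      have h1 : ∀ j : Fin C, (Real.sqrt (p i j) * (Real.sqrt (N i))⁻¹)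
            * (Real.sqrt (p i j) * ((Real.sqrt (N' j))⁻¹ * x j))
          = (Real.sqrt (N i))⁻¹ * (p i j * ((Real.sqrt (N' j))⁻¹ * x j)) := by
        intro j
        have hpp : Real.sqrt (p i j) * Real.sqrt (p i j) = p i j :=
          Real.mul_self_sqrt (hppos i j).le
        linear_combination ((Real.sqrt (N i))⁻¹ * ((Real.sqrt (N' j))⁻¹ * x j)) * hpp
      have h2 : ∀ j : Fin C, (Real.sqrt (p i j) * (Real.sqrt (N i))⁻¹) ^ 2
          = p i j * (N i)⁻¹ := by
        intro j
        rw [mul_pow, Real.sq_sqrt (hppos i j).le, inv_pow, hsqN i]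
      have h3 : ∀ j : Fin C, (Real.sqrt (p i j) * ((Real.sqrt (N' j))⁻¹ * x j)) ^ 2
          = p i j * ((N' j)⁻¹ * (x j) ^ 2) := by
        intro j
        rw [mul_pow, mul_pow, Real.sq_sqrt (hppos i j).le, inv_pow, hsqN' j]
      have h4 : ∑ j, (Real.sqrt (p i j) * (Real.sqrt (N i))⁻¹) ^ 2 = 1 := by
        rw [Finset.sum_congr rfl fun j _ => h2 j, ← Finset.sum_mul]
        exact mul_inv_cancel₀ (hNpos i).ne'
      have h5 : y i = ∑ j, (Real.sqrt (p i j) * (Real.sqrt (N i))⁻¹)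
          * (Real.sqrt (p i j) * ((Real.sqrt (N' j))⁻¹ * x j)) := by
        simp only [hy_def]
        rw [Finset.mul_sum]
        exact Finset.sum_congr rfl fun j _ => (h1 j).symm
      calc (y i) ^ 2
          = (∑ j, (Real.sqrt (p i j) * (Real.sqrt (N i))⁻¹)
              * (Real.sqrt (p i j) * ((Real.sqrt (N' j))⁻¹ * x j))) ^ 2 := by rw [← h5]
        _ ≤ (∑ j, (Real.sqrt (p i j) * (Real.sqrt (N i))⁻¹) ^ 2)
              * ∑ j, (Real.sqrt (p i j) * ((Real.sqrt (N' j))⁻¹ * x j)) ^ 2 := hcs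
        _ = ∑ j, p i j * ((N' j)⁻¹ * (x j) ^ 2) := by
              rw [h4, one_mul]
              exact Finset.sum_congr rfl fun j _ => h3 j
    have boundC : ∑ i, (y i) ^ 2 ≤ X2 := by
      calc ∑ i, (y i) ^ 2 ≤ ∑ i, ∑ j, p i j * ((N' j)⁻¹ * (x j) ^ 2) :=
            Finset.sum_le_sum fun i _ => hy2 i
        _ = ∑ j, N' j * ((N' j)⁻¹ * (x j) ^ 2) := by
            rw [Finset.sum_comm]
            refine Finset.sum_congr rfl fun j _ => ?_
            rw [← Finset.sum_mul]
        _ = X2 := by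
            refine Finset.sum_congr rfl fun j _ => ?_
            rw [← mul_assoc, mul_inv_cancel₀ (hN'pos j).ne', one_mul]
    -- bound B : γ² T ≤ (Υ-1)² X2
    set c : Fin R → ℝ := fun k => Real.sqrt (N k) / T - (R:ℝ)⁻¹ * (Real.sqrt (N k))⁻¹
      with hc_def
    have hγc : γ = ∑ k, y k * c k := by
      rw [hγ_def, hβ_def, hα_def, Finset.sum_div, Finset.mul_sum, ← Finset.sum_sub_distrib]
      exact Finset.sum_congr rfl fun k _ => by rw [hc_def]; ring
    have hck : ∀ k, T * (c k) ^ 2 ≤ (Υ - 1) ^ 2 / R := by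
      intro k
      have hceq : c k * ((R:ℝ) * T * Real.sqrt (N k)) = (R:ℝ) * N k - T := by
        rw [hc_def]
        field_simp [hRpos.ne', hTpos.ne', (hsqNpos k).ne']
        linear_combination (R:ℝ) * hsqN k
      have hca : c k = ((R:ℝ) * N k - T) / ((R:ℝ) * T * Real.sqrt (N k)) := by
        rw [eq_div_iff (mul_pos (mul_pos hRpos hTpos) (hsqNpos k)).ne']
        exact hceq
      have hbound : ((R:ℝ) * N k - T) ^ 2 ≤ ((Υ - 1) * ((R:ℝ) * ((C:ℝ) * s))) ^ 2 := by
        have h1 : (R:ℝ) * N k - T ≤ (Υ - 1) * ((R:ℝ) * ((C:ℝ) * s)) := by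
          nlinarith [hNub k, hTlb]
        have h2 : -((Υ - 1) * ((R:ℝ) * ((C:ℝ) * s))) ≤ (R:ℝ) * N k - T := by
          nlinarith [hNlb k, hTub]
        exact sq_le_sq' h2 h1
      have hpos1 : (0:ℝ) < ((R:ℝ) * T * Real.sqrt (N k)) ^ 2 :=
        pow_pos (mul_pos (mul_pos hRpos hTpos) (hsqNpos k)) 2
      rw [hca, div_pow, ← mul_div_assoc, div_le_div_iff₀ hpos1 hRpos]
      have hsq : ((R:ℝ) * T * Real.sqrt (N k)) ^ 2 = (R:ℝ) ^ 2 * T ^ 2 * N k := by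
        rw [mul_pow, mul_pow, hsqN k]
      rw [hsq]
      have h6 : ((R:ℝ) * ((C:ℝ) * s)) * ((C:ℝ) * s) ≤ T * N k :=
        mul_le_mul hTlb (hNlb k) (by positivity) hTpos.le
      nlinarith [mul_le_mul_of_nonneg_left hbound (mul_nonneg hTpos.le hRpos.le),
        mul_le_mul_of_nonneg_left h6
          (mul_nonneg (mul_nonneg (sq_nonneg (Υ - 1)) (sq_nonneg (R:ℝ))) hTpos.le),
        hTpos, hRpos, sq_nonneg (Υ - 1)]
    have hTc : ∑ k, T * (c k) ^ 2 ≤ (Υ - 1) ^ 2 := by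
      calc ∑ k, T * (c k) ^ 2 ≤ ∑ _k : Fin R, (Υ - 1) ^ 2 / R :=
            Finset.sum_le_sum fun k _ => hck k
        _ = (Υ - 1) ^ 2 := by
            rw [Finset.sum_const, Finset.card_univ, Fintype.card_fin, nsmul_eq_mul]
            field_simp [hRpos.ne']
    have boundB : γ ^ 2 * T ≤ (Υ - 1) ^ 2 * X2 := by
      have h1 : γ ^ 2 ≤ (∑ k, (y k) ^ 2) * (∑ k, (c k) ^ 2) := by
        rw [hγc]
        exact Finset.sum_mul_sq_le_sq_mul_sq Finset.univ y c
      have hynn : 0 ≤ ∑ k, (y k) ^ 2 := Finset.sum_nonneg fun k _ => sq_nonneg _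
      have h2 : (∑ k, (c k) ^ 2) * T = ∑ k, T * (c k) ^ 2 := by
        rw [Finset.sum_mul]
        exact Finset.sum_congr rfl fun k _ => by ring
      calc γ ^ 2 * T ≤ ((∑ k, (y k) ^ 2) * (∑ k, (c k) ^ 2)) * T :=
            mul_le_mul_of_nonneg_right h1 hTpos.le
        _ = (∑ k, (y k) ^ 2) * ∑ k, T * (c k) ^ 2 := by rw [mul_assoc, h2]
        _ ≤ X2 * (Υ - 1) ^ 2 := by
            refine mul_le_mul boundC hTc ?_ hX2nn
            exact Finset.sum_nonneg fun k _ =>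
              mul_nonneg hTpos.le (sq_nonneg _)
        _ = (Υ - 1) ^ 2 * X2 := mul_comm _ _
    -- bound A : A2 ≤ (1 - 1/Υ³) X2
    have hNg0 : ∑ i, N i * g i = 0 := by
      rw [← ht_orth]
      refine Finset.sum_congr rfl fun i _ => ?_
      rw [← hgt i]
      linear_combination (-(g i)) * hsqN i
    have hA2g : A2 = ∑ i, N i * (g i) ^ 2 := by
      rw [hA2_def]
      refine Finset.sum_congr rfl fun i _ => ?_
      rw [← hgt i, mul_pow, hsqN i]
    set Wt : Fin C → ℝ := fun j => (Real.sqrt (N' j))⁻¹ * ∑ i, p i j * g i with hWt_def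
    have hty : A2 = ∑ j, x j * Wt j := by
      have h1 : A2 = ∑ i, t i * y i := by
        rw [hA2_def]
        have h0 : ∀ i, t i * y i = (t i) ^ 2 + (β / T) * (Real.sqrt (N i) * t i) := by
          intro i
          rw [ht_def]
          ring
        rw [Finset.sum_congr rfl fun i _ => h0 i, Finset.sum_add_distrib, ← Finset.mul_sum,
          ht_orth]
        ring
      have h2 : ∀ i, t i * y i = ∑ j, (p i j * ((Real.sqrt (N' j))⁻¹ * x j)) * g i := by
        intro i
        simp only [hy_def]
        rw [← mul_assoc, Finset.mul_sum]
        refine Finset.sum_congr rfl fun j _ => ?_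
        simp only [hg_def]
        ring
      have h3 : ∑ i, t i * y i = ∑ j, x j * Wt j := by
        rw [Finset.sum_congr rfl fun i _ => h2 i, Finset.sum_comm]
        refine Finset.sum_congr rfl fun j _ => ?_
        simp only [hWt_def]
        conv_rhs => rw [← mul_assoc, Finset.mul_sum]
        exact Finset.sum_congr rfl fun i _ => by ring
      rw [h1, h3]
    have hCS : A2 ^ 2 ≤ X2 * ∑ j, (Wt j) ^ 2 := by
      calc A2 ^ 2 = (∑ j, x j * Wt j) ^ 2 := by rw [← hty]
        _ ≤ (∑ j, (x j) ^ 2) * ∑ j, (Wt j) ^ 2 :=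
            Finset.sum_mul_sq_le_sq_mul_sq Finset.univ x Wt
        _ = X2 * ∑ j, (Wt j) ^ 2 := by rw [← hX2_def]
    have hD : ∑ j, (Wt j) ^ 2 ≤ (1 - 1 / Υ ^ 3) * A2 := by
      have hid : ∀ j, (Wt j) ^ 2 = (∑ i, p i j * (g i) ^ 2)
          - (2 * N' j)⁻¹ * (∑ i, ∑ k, p i j * p k j * (g i - g k) ^ 2) := by
        intro j
        have hv := var_ident (fun i => p i j) g
        have hNj : ∑ i, p i j = N' j := rfl
        rw [hNj] at hv
        have hWt2 : (Wt j) ^ 2 = (N' j)⁻¹ * (∑ i, p i j * g i) ^ 2 := by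
          simp only [hWt_def]
          rw [mul_pow, inv_pow, hsqN' j]
        rw [hWt2]
        field_simp [(hN'pos j).ne']
        linear_combination hv
      have hsum1 : ∑ j, ∑ i, p i j * (g i) ^ 2 = A2 := by
        rw [Finset.sum_comm, hA2g]
        refine Finset.sum_congr rfl fun i _ => ?_
        rw [← Finset.sum_mul]
      have hstep : ∑ j, (Wt j) ^ 2
          = A2 - ∑ j, (2 * N' j)⁻¹ * (∑ i, ∑ k, p i j * p k j * (g i - g k) ^ 2) := by
        rw [Finset.sum_congr rfl fun j _ => hid j, Finset.sum_sub_distrib, hsum1]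
      have hkey2 : 1 / Υ ^ 3 * A2
          ≤ ∑ j, (2 * N' j)⁻¹ * (∑ i, ∑ k, p i j * p k j * (g i - g k) ^ 2) := by
        have hvN := var_ident N g
        rw [hNg0, ← hT_def, ← hA2g] at hvN
        have hA2ik : A2 = (2 * T)⁻¹ * ∑ i, ∑ k, N i * N k * (g i - g k) ^ 2 := by
          rw [hvN]
          field_simp [hTpos.ne']
          ring
        have hswap2 : ∑ j, (2 * N' j)⁻¹ * (∑ i, ∑ k, p i j * p k j * (g i - g k) ^ 2)
            = ∑ i, ∑ k, (∑ j, p i j * p k j * (2 * N' j)⁻¹) * (g i - g k) ^ 2 := by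
          simp_rw [Finset.mul_sum]
          rw [Finset.sum_comm]
          refine Finset.sum_congr rfl fun i _ => ?_
          rw [Finset.sum_comm]
          refine Finset.sum_congr rfl fun k _ => ?_
          rw [Finset.sum_mul]
          exact Finset.sum_congr rfl fun j _ => by ring
        rw [hA2ik, hswap2]
        conv_lhs => rw [← mul_assoc, Finset.mul_sum]
        refine Finset.sum_le_sum fun i _ => ?_
        conv_lhs => rw [Finset.mul_sum]
        refine Finset.sum_le_sum fun k _ => ?_
        have hfac : 1 / Υ ^ 3 * (2 * T)⁻¹ * (N i * N k * (g i - g k) ^ 2)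
            = (1 / Υ ^ 3 * ((2 * T)⁻¹ * (N i * N k))) * (g i - g k) ^ 2 := by ring
        rw [hfac]
        refine mul_le_mul_of_nonneg_right ?_ (sq_nonneg _)
        have h2RCs : (0:ℝ) < 2 * ((R:ℝ) * ((C:ℝ) * s)) :=
          mul_pos two_pos (mul_pos hRpos (mul_pos hCpos hs))
        have hTi : (2 * T)⁻¹ ≤ (2 * ((R:ℝ) * ((C:ℝ) * s)))⁻¹ := by
          apply inv_anti₀ h2RCs
          linarith
        have hNN : N i * N k ≤ ((C:ℝ) * (Υ * s)) * ((C:ℝ) * (Υ * s)) :=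
          mul_le_mul (hNub i) (hNub k) (hNpos k).le
            (le_of_lt (mul_pos hCpos (mul_pos hΥ0 hs)))
        have hΥ3 : (0:ℝ) < 1 / Υ ^ 3 := by
          apply one_div_pos.mpr
          exact pow_pos hΥ0 3
        calc 1 / Υ ^ 3 * ((2 * T)⁻¹ * (N i * N k))
            ≤ 1 / Υ ^ 3 * ((2 * ((R:ℝ) * ((C:ℝ) * s)))⁻¹
                * (((C:ℝ) * (Υ * s)) * ((C:ℝ) * (Υ * s)))) := by
              refine mul_le_mul_of_nonneg_left ?_ hΥ3.le
              exact mul_le_mul hTi hNN (mul_nonneg (hNpos i).le (hNpos k).le)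
                (inv_pos.mpr h2RCs).le
          _ = ∑ _j : Fin C, s * s * (2 * ((R:ℝ) * (Υ * s)))⁻¹ := by
              rw [Finset.sum_const, Finset.card_univ, Fintype.card_fin, nsmul_eq_mul]
              field_simp [hΥ0.ne', hRpos.ne', hCpos.ne', hs.ne']
          _ ≤ ∑ j, p i j * p k j * (2 * N' j)⁻¹ := by
              refine Finset.sum_le_sum fun j _ => ?_
              have h2RΥs : (0:ℝ) < 2 * ((R:ℝ) * (Υ * s)) :=
                mul_pos two_pos (mul_pos hRpos (mul_pos hΥ0 hs))
              have h1 : (2 * ((R:ℝ) * (Υ * s)))⁻¹ ≤ (2 * N' j)⁻¹ := by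
                apply inv_anti₀ (mul_pos two_pos (hN'pos j))
                linarith [hN'ub j]
              exact mul_le_mul (mul_le_mul (hps i j) (hps k j) hs.le (hppos i j).le) h1
                (inv_pos.mpr h2RΥs).le (mul_nonneg (hppos i j).le (hppos k j).le)
      rw [hstep]
      linarith [hkey2]
    have boundA : A2 ≤ (1 - 1 / Υ ^ 3) * X2 := by
      rcases eq_or_lt_of_le hA2nn with h0 | h0
      · rw [← h0]
        exact mul_nonneg hδ hX2nn
      · have hh : A2 * A2 ≤ ((1 - 1 / Υ ^ 3) * X2) * A2 := by
          calc A2 * A2 = A2 ^ 2 := (sq A2).symm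
            _ ≤ X2 * ∑ j, (Wt j) ^ 2 := hCS
            _ ≤ X2 * ((1 - 1 / Υ ^ 3) * A2) := by
                exact mul_le_mul_of_nonneg_left hD hX2nn
            _ = ((1 - 1 / Υ ^ 3) * X2) * A2 := by ring
        exact le_of_mul_le_mul_right hh h0
    rw [hMsum]
    calc A2 + γ ^ 2 * T ≤ (1 - 1 / Υ ^ 3) * X2 + (Υ - 1) ^ 2 * X2 := add_le_add boundA boundB
      _ = (1 - 1 / Υ ^ 3 + (Υ - 1) ^ 2) * X2 := by ring
  -- CONCLUSION
  -- CONCLUSION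
  have hnorm : ∀ x : EuclideanSpace ℝ (Fin C),
      ‖(LinearMap.toContinuousLinearMap (Matrix.toEuclideanLin (Mprime1 p))) x‖
        ≤ Real.sqrt (1 - 1 / Υ ^ 3 + (Υ - 1) ^ 2) * ‖x‖ := by
    intro x
    have happ : (LinearMap.toContinuousLinearMap (Matrix.toEuclideanLin (Mprime1 p))) x
        = (Matrix.toEuclideanLin (Mprime1 p)) x := rfl
    rw [happ, Matrix.toEuclideanLin_apply, EuclideanSpace.norm_eq, EuclideanSpace.norm_eq]
    simp only [PiLp.toLp_apply, Real.norm_eq_abs, sq_abs]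
    rw [← Real.sqrt_mul hcoef]
    exact Real.sqrt_le_sqrt (key _)
  exact ContinuousLinearMap.opNorm_le_bound _ (Real.sqrt_nonneg _) hnorm

end CollapsedGibbs
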